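/- arXiv:2009.05480 — 3 statements merged into one kernel-verified Lean document; each statement's English description precedes it below -/
import Mathlib

section
/- Let (N_i)_{i≥1} be a strictly increasing sequence of positive integers such that for every d ∈ ℕ, eventually N_i > 2 d N_{i-1}. Define the power series f(x) = Σ_{i>0} t^i P_{N_i}(x) over ℂ[[t]], where P_k(x) = x^k ∏_{j=1}^{k} (x - j). Then f, viewed as an element of ℂ[[t]][[x]], is transcendental over ℂ((t))(x); i.e., f satisfies no nonzero polynomial relation over the field of Laurent series in t with x adjoined. -/
open PowerSeries

/-- `P_k(x) = x^k ∏_{j=1}^k (x - j)`. -/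
noncomputable def lacunaryPoly (k : ℕ) : Polynomial ℂ :=
  Polynomial.X ^ k * ∏ j ∈ Finset.range k, (Polynomial.X - Polynomial.C ((j : ℂ) + 1))

/-- The power series `f(x) = Σ_{i>0} t^i P_{N_i}(x)`, viewed as an element of
`ℂ[[t]][[x]]`: the coefficient of `x^j` is the power series
`Σ_i t^i · (coefficient of x^j in P_{N_i}) ∈ ℂ[[t]]` (a finite sum, since
`N_i ≥ i` forces `i ≤ j` for nonzero contributions when `N` is strictly
increasing with `N 1 ≥ 1`). -/
noncomputable def lacunarySeries (N : ℕ → ℕ) : PowerSeries (PowerSeries ℂ) :=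
  PowerSeries.mk fun j =>
    ∑ i ∈ Finset.Icc 1 j,
      (PowerSeries.X : PowerSeries ℂ) ^ i *
        (PowerSeries.C : ℂ →+* PowerSeries ℂ) ((lacunaryPoly (N i)).coeff j)

namespace LacAux

noncomputable instance : CharZero (PowerSeries ℂ) :=
  RingHom.charZero (PowerSeries.constantCoeff)

local notation "A" => PowerSeries ℂ
local notation "B" => PowerSeries (PowerSeries ℂ)
local notation "φ" => (Polynomial.coeToPowerSeries.ringHom :
  Polynomial (PowerSeries ℂ) →+* PowerSeries (PowerSeries ℂ))

lemma lac_monic (k : ℕ) : (lacunaryPoly k).Monic := by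
  exact (Polynomial.monic_X_pow k).mul <|
    Polynomial.monic_prod_of_monic _ _ fun j _ => Polynomial.monic_X_sub_C _

lemma lac_natDegree (k : ℕ) : (lacunaryPoly k).natDegree = 2 * k := by
  rw [lacunaryPoly, (Polynomial.monic_X_pow k).natDegree_mul
    (Polynomial.monic_prod_of_monic _ _ fun j _ => Polynomial.monic_X_sub_C _)]
  rw [Polynomial.natDegree_X_pow, Polynomial.natDegree_prod _ _
    (fun j _ => Polynomial.X_sub_C_ne_zero _)]
  rw [Finset.sum_congr rfl fun j _ => Polynomial.natDegree_X_sub_C _]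
  simp [two_mul]

lemma lac_coeff_lt {k j : ℕ} (h : j < k) : (lacunaryPoly k).coeff j = 0 := by
  have : (Polynomial.X : Polynomial ℂ) ^ k ∣ lacunaryPoly k := dvd_mul_right _ _
  exact Polynomial.X_pow_dvd_iff.mp this j h

lemma lac_coeff_top (k : ℕ) : (lacunaryPoly k).coeff (2 * k) = 1 := by
  have := (lac_monic k).coeff_natDegree
  rwa [lac_natDegree] at this

lemma lac_coeff_gt {k j : ℕ} (h : 2 * k < j) : (lacunaryPoly k).coeff j = 0 :=
  Polynomial.coeff_eq_zero_of_natDegree_lt (by rw [lac_natDegree]; exact h)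

/-- The truncation `f_m = Σ_{i=1}^m t^i P_{N_i}` as a polynomial in `x` over `A`. -/
noncomputable def fm (N : ℕ → ℕ) (m : ℕ) : Polynomial (PowerSeries ℂ) :=
  ∑ i ∈ Finset.Icc 1 m,
    Polynomial.C ((PowerSeries.X : PowerSeries ℂ) ^ i) *
      (lacunaryPoly (N i)).map ((PowerSeries.C : ℂ →+* PowerSeries ℂ))

lemma coeff_f (N : ℕ → ℕ) (j n : ℕ) :
    PowerSeries.coeff n (PowerSeries.coeff j (lacunarySeries N)) =
      if 1 ≤ n ∧ n ≤ j then (lacunaryPoly (N n)).coeff j else 0 := by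
  rw [lacunarySeries, coeff_mk, map_sum]
  have : ∀ i ∈ Finset.Icc 1 j,
      PowerSeries.coeff n ((PowerSeries.X : PowerSeries ℂ) ^ i *
        (PowerSeries.C : ℂ →+* PowerSeries ℂ) ((lacunaryPoly (N i)).coeff j)) =
      if n = i then (lacunaryPoly (N i)).coeff j else 0 := by
    intro i _
    rw [mul_comm, PowerSeries.coeff_C_mul, PowerSeries.coeff_X_pow]
    split <;> simp
  rw [Finset.sum_congr rfl this, Finset.sum_ite_eq]
  simp [Finset.mem_Icc]

lemma coeff_fm (N : ℕ → ℕ) (m j n : ℕ) :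
    PowerSeries.coeff n ((fm N m).coeff j) =
      if 1 ≤ n ∧ n ≤ m then (lacunaryPoly (N n)).coeff j else 0 := by
  rw [fm, Polynomial.finset_sum_coeff, map_sum]
  have : ∀ i ∈ Finset.Icc 1 m,
      PowerSeries.coeff n ((Polynomial.C ((PowerSeries.X : PowerSeries ℂ) ^ i) *
        (lacunaryPoly (N i)).map ((PowerSeries.C : ℂ →+* PowerSeries ℂ))).coeff j) =
      if n = i then (lacunaryPoly (N i)).coeff j else 0 := by
    intro i _
    rw [Polynomial.coeff_C_mul, Polynomial.coeff_map, mul_comm,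
      PowerSeries.coeff_C_mul, PowerSeries.coeff_X_pow]
    split <;> simp
  rw [Finset.sum_congr rfl this, Finset.sum_ite_eq]
  simp [Finset.mem_Icc]

/-- `tOrd g a`: every `x`-coefficient of `g` has `t`-adic order `≥ a`. -/
def tOrd (g : PowerSeries (PowerSeries ℂ)) (a : ℕ) : Prop :=
  ∀ j n : ℕ, n < a → PowerSeries.coeff n (PowerSeries.coeff j g) = 0

lemma tOrd_zero (g : PowerSeries (PowerSeries ℂ)) : tOrd g 0 := by
  intro j n hn; omega

lemma tOrd_mul {g h : PowerSeries (PowerSeries ℂ)} {a b : ℕ}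
    (hg : tOrd g a) (hh : tOrd h b) : tOrd (g * h) (a + b) := by
  intro j n hn
  rw [PowerSeries.coeff_mul, map_sum]
  refine Finset.sum_eq_zero fun p hp => ?_
  rw [PowerSeries.coeff_mul]
  refine Finset.sum_eq_zero fun q hq => ?_
  rw [Finset.HasAntidiagonal.mem_antidiagonal] at hq
  rcases lt_or_ge q.1 a with h1 | h1
  · rw [hg p.1 q.1 h1, zero_mul]
  · rw [hh p.2 q.2 (by omega), mul_zero]

lemma tOrd_of_dvd {g h : PowerSeries (PowerSeries ℂ)} {a : ℕ}
    (hg : tOrd g a) (hd : g ∣ h) : tOrd h a := by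
  obtain ⟨c, rfl⟩ := hd
  simpa using tOrd_mul hg (tOrd_zero c)

section Main

variable (N : ℕ → ℕ)

/-- difference `f - φ (fm N m)` coefficients. -/
lemma coeff_diff (m j n : ℕ) :
    PowerSeries.coeff n (PowerSeries.coeff j
        (lacunarySeries N - Polynomial.coeToPowerSeries.ringHom (fm N m))) =
      (if 1 ≤ n ∧ n ≤ j then (lacunaryPoly (N n)).coeff j else 0) -
      (if 1 ≤ n ∧ n ≤ m then (lacunaryPoly (N n)).coeff j else 0) := by
  rw [map_sub, map_sub, coeff_f, Polynomial.coeToPowerSeries.ringHom_apply,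
    Polynomial.coeff_coe, coeff_fm]

lemma tOrd_diff (hmono : StrictMono N) (m : ℕ) :
    tOrd (lacunarySeries N - Polynomial.coeToPowerSeries.ringHom (fm N m)) (m + 1) := by
  intro j n hn
  rw [coeff_diff]
  rcases le_or_gt n j with h | h
  · simp [h, show n ≤ m by omega]
  · -- n > j : first if is 0; second: if active then coeff j = 0 since j < n ≤ N n
    have h2 : ∀ (hh : 1 ≤ n ∧ n ≤ m), (lacunaryPoly (N n)).coeff j = 0 := fun hh =>
      lac_coeff_lt (lt_of_lt_of_le h (hmono.le_apply))
    rcases Decidable.em (1 ≤ n ∧ n ≤ m) with hc | hc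
    · simp [h.not_ge, hc, h2 hc]
    · simp [h.not_ge, hc]

lemma coeff_diff_top (hmono : StrictMono N) (m j : ℕ) :
    PowerSeries.coeff (m + 1) (PowerSeries.coeff j
        (lacunarySeries N - Polynomial.coeToPowerSeries.ringHom (fm N m))) =
      (lacunaryPoly (N (m + 1))).coeff j := by
  rw [coeff_diff]
  have : ¬ ((1 : ℕ) ≤ m + 1 ∧ m + 1 ≤ m) := by omega
  rcases le_or_gt (m + 1) j with h | h
  · simp [h, this]
  · have : (lacunaryPoly (N (m + 1))).coeff j = 0 :=
      lac_coeff_lt (lt_of_lt_of_le h (hmono.le_apply))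
    simp [h.not_ge, this]

/-- degree bound for `fm`. -/
lemma natDegree_fm_le (hmono : StrictMono N) (m : ℕ) (hm : 1 ≤ m) : (fm N m).natDegree ≤ 2 * N m := by
  rw [fm]
  refine Polynomial.natDegree_sum_le_of_forall_le _ _ fun i hi => ?_
  rw [Finset.mem_Icc] at hi
  refine (Polynomial.natDegree_mul_le).trans ?_
  have h1 : (Polynomial.C ((PowerSeries.X : PowerSeries ℂ) ^ i)).natDegree = 0 :=
    Polynomial.natDegree_C _
  have h2 : ((lacunaryPoly (N i)).map ((PowerSeries.C : ℂ →+* PowerSeries ℂ))).natDegree ≤ 2 * N i :=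
    (Polynomial.natDegree_map_le).trans_eq (lac_natDegree _)
  have h3 : N i ≤ N m := hmono.monotone hi.2
  omega

/-- degree bound for polynomial evaluation. -/
lemma coeff_eval_eq_zero (Q : Polynomial (Polynomial (PowerSeries ℂ)))
    (p : Polynomial (PowerSeries ℂ)) {J : ℕ}
    (hJ : (Q.support.sup fun k => (Q.coeff k).natDegree) + Q.natDegree * p.natDegree < J) :
    (Q.eval p).coeff J = 0 := by
  rw [Polynomial.eval_eq_sum, Polynomial.sum_def, Polynomial.finset_sum_coeff]
  refine Finset.sum_eq_zero fun k hk => ?_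
  refine Polynomial.coeff_eq_zero_of_natDegree_lt (lt_of_le_of_lt ?_ hJ)
  refine (Polynomial.natDegree_mul_le).trans ?_
  have h1 : (Q.coeff k).natDegree ≤ Q.support.sup fun k => (Q.coeff k).natDegree :=
    Finset.le_sup (f := fun k => (Q.coeff k).natDegree) hk
  have h2 : (p ^ k).natDegree ≤ k * p.natDegree := Polynomial.natDegree_pow_le
  have h3 : k ≤ Q.natDegree := Polynomial.le_natDegree_of_mem_supp _ hk
  have h4 : k * p.natDegree ≤ Q.natDegree * p.natDegree := Nat.mul_le_mul_right _ h3
  omega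

end Main

end LacAux


open LacAux in
/-- If `(N_i)_{i ≥ 1}` is strictly increasing, positive, and for every `d`
eventually `N_{i+1} > 2 d N_i`, then `f(x) = Σ_{i>0} t^i P_{N_i}(x)` is transcendental
over `ℂ((t))(x)`: it satisfies no nonzero polynomial relation over `ℂ[[t]][x]`
(equivalently, over the field of Laurent series in `t` with `x` adjoined). -/
theorem lacunarySeries_transcendental
    (N : ℕ → ℕ) (hmono : StrictMono N) (hpos : 1 ≤ N 1)
    (hgrow : ∀ d : ℕ, ∃ I : ℕ, ∀ i ≥ I, 2 * d * N i < N (i + 1))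
    (Q : Polynomial (Polynomial (PowerSeries ℂ)))
    (hQ : Polynomial.eval₂ Polynomial.coeToPowerSeries.ringHom (lacunarySeries N) Q = 0) :
    Q = 0 := by
  classical
  set φ' : Polynomial (PowerSeries ℂ) →+* PowerSeries (PowerSeries ℂ) :=
    Polynomial.coeToPowerSeries.ringHom with hφ'
  set f : PowerSeries (PowerSeries ℂ) := lacunarySeries N with hfdef
  -- evaluation of a polynomial at a polynomial point commutes with φ'
  have heval : ∀ (p : Polynomial (Polynomial (PowerSeries ℂ))) (q : Polynomial (PowerSeries ℂ)),
      (p.map φ').eval (φ' q) = φ' (p.eval q) := by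
    intro p q
    rw [Polynomial.eval_map, Polynomial.eval₂_at_apply]
  have hφcoeff : ∀ (q : Polynomial (PowerSeries ℂ)) (j : ℕ),
      PowerSeries.coeff j (φ' q) = q.coeff j := by
    intro q j
    rw [hφ', Polynomial.coeToPowerSeries.ringHom_apply, Polynomial.coeff_coe]
  have hφinj : Function.Injective φ' := by
    intro p q h
    ext j
    rw [← hφcoeff p j, ← hφcoeff q j, h]
  suffices H : ∀ n : ℕ, ∀ Q : Polynomial (Polynomial (PowerSeries ℂ)), Q.natDegree ≤ n →
      Polynomial.eval₂ φ' f Q = 0 → Q = 0 by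
    exact H Q.natDegree Q le_rfl hQ
  intro n
  induction n using Nat.strong_induction_on with
  | _ n IH =>
  intro Q hdeg hQ0
  rcases eq_or_ne (Q.natDegree) 0 with h0 | h0
  · -- constant case
    rw [Polynomial.eq_C_of_natDegree_eq_zero h0] at hQ0 ⊢
    rw [Polynomial.eval₂_C] at hQ0
    rw [show (0 : PowerSeries (PowerSeries ℂ)) = φ' 0 by simp] at hQ0
    rw [hφinj hQ0]
    simp
  by_contra hQne
  -- the derivative does not annihilate f
  have hQ'ne : Q.derivative ≠ 0 :=
    fun h => h0 (Polynomial.natDegree_eq_zero_of_derivative_eq_zero h)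
  have hQ'f : Polynomial.eval₂ φ' f Q.derivative ≠ 0 := by
    intro h
    exact hQ'ne (IH Q.derivative.natDegree
      (lt_of_lt_of_le (Polynomial.natDegree_derivative_lt h0) hdeg) _ le_rfl h)
  set G : PowerSeries (PowerSeries ℂ) := Polynomial.eval₂ φ' f Q.derivative with hGdef
  have hexists : ∃ w : ℕ, ∃ j : ℕ,
      PowerSeries.coeff w (PowerSeries.coeff j G) ≠ 0 := by
    by_contra hc
    push_neg at hc
    exact hQ'f (PowerSeries.ext fun j => PowerSeries.ext fun w => by simpa using hc w j)
  set w : ℕ := Nat.find hexists with hwdef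
  obtain ⟨j₀, hj₀⟩ := Nat.find_spec hexists
  have hwmin : ∀ n' < w, ∀ j : ℕ,
      PowerSeries.coeff n' (PowerSeries.coeff j G) = 0 := by
    intro n' hn' j
    have := Nat.find_min hexists hn'
    push_neg at this
    exact this j
  set γ : ℕ → ℂ := fun j => PowerSeries.coeff w (PowerSeries.coeff j G)
    with hγdef
  set E' : ℕ → Polynomial (PowerSeries ℂ) := fun m => Q.derivative.eval (fm N m) with hE'def
  set E : ℕ → Polynomial (PowerSeries ℂ) := fun m => Q.eval (fm N m) with hEdef
  -- agreement of G with E' m below level m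
  have hagree : ∀ m j n', n' ≤ m →
      PowerSeries.coeff n' (PowerSeries.coeff j G) =
      PowerSeries.coeff n' ((E' m).coeff j) := by
    intro m j n' hn'
    have hdvd : (f - φ' (fm N m)) ∣ (G - φ' (E' m)) := by
      have h1 : G = (Q.derivative.map φ').eval f := by
        rw [hGdef, Polynomial.eval_map]
      have h2 : φ' (E' m) = (Q.derivative.map φ').eval (φ' (fm N m)) := by
        rw [heval]
      rw [h1, h2]
      exact Polynomial.sub_dvd_eval_sub _ _ _
    have hto : tOrd (G - φ' (E' m)) (m + 1) := tOrd_of_dvd (tOrd_diff N hmono m) hdvd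
    have := hto j n' (by omega)
    rw [map_sub, map_sub, sub_eq_zero] at this
    rw [this, hφcoeff]
  -- top of the support of γ
  have hγeq : ∀ j, γ j = PowerSeries.coeff w ((E' w).coeff j) :=
    fun j => hagree w j w le_rfl
  set Dd : ℕ := (E' w).natDegree with hDd
  have hγzero : ∀ j, Dd < j → γ j = 0 := by
    intro j hj
    rw [hγeq, Polynomial.coeff_eq_zero_of_natDegree_lt hj, map_zero]
  set s : Finset ℕ := (Finset.range (Dd + 1)).filter fun j => γ j ≠ 0 with hs
  have hj₀mem : j₀ ∈ s := by
    refine Finset.mem_filter.mpr ⟨Finset.mem_range.mpr ?_, hj₀⟩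
    by_contra hD
    exact hj₀ (hγzero j₀ (by omega))
  set δ : ℕ := s.max' ⟨j₀, hj₀mem⟩ with hδdef
  have hδ : γ δ ≠ 0 := (Finset.mem_filter.mp (s.max'_mem ⟨j₀, hj₀mem⟩)).2
  have hδtop : ∀ j, δ < j → γ j = 0 := by
    intro j hj
    by_contra hne
    have hjD : j < Dd + 1 := by
      by_contra hD
      exact hne (hγzero j (by omega))
    have hjs : j ∈ s := Finset.mem_filter.mpr ⟨Finset.mem_range.mpr hjD, hne⟩
    exact absurd (Finset.le_max' s j hjs) (by omega)
  -- choice of m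
  set D : ℕ := Q.support.sup fun k => (Q.coeff k).natDegree with hD
  set d : ℕ := Q.natDegree with hdd
  obtain ⟨I, hI⟩ := hgrow (d + D + δ + 1)
  set m : ℕ := I + w + 1 with hm
  have hNm : 1 ≤ N m := le_trans (by omega) hmono.le_apply
  have hgap : 2 * (d + D + δ + 1) * N m < N (m + 1) := hI m (by omega)
  set J : ℕ := δ + 2 * N (m + 1) with hJ
  set n' : ℕ := (m + 1) + w with hn'
  set g : PowerSeries (PowerSeries ℂ) := f - φ' (fm N m) with hg
  -- Taylor expansion
  obtain ⟨kk, hkk⟩ := Polynomial.binomExpansion (Q.map φ') (φ' (fm N m)) g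
  have hsum : φ' (fm N m) + g = f := by rw [hg]; ring
  rw [hsum] at hkk
  have hz : (Q.map φ').eval f = 0 := by rw [Polynomial.eval_map]; exact hQ0
  rw [hz, heval, Polynomial.derivative_map, heval] at hkk
  have heq : (0 : PowerSeries (PowerSeries ℂ)) =
      φ' (E m) + φ' (E' m) * g + kk * g ^ 2 := hkk
  -- extract the (J, n') coefficient
  have hc : PowerSeries.coeff n' (PowerSeries.coeff J
      (φ' (E m) + φ' (E' m) * g + kk * g ^ 2)) = 0 := by
    rw [← heq]; simp
  rw [map_add, map_add, map_add, map_add] at hc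
  -- term 1 vanishes by degree considerations
  have hfmdeg : (fm N m).natDegree ≤ 2 * N m := natDegree_fm_le N hmono m (by omega)
  have harith : ∀ dd DD δδ u v e JJ : ℕ, e ≤ 2 * u → 2 * (dd + DD + δδ + 1) * u < v →
      1 ≤ u → JJ = δδ + 2 * v → DD + dd * e < JJ := by
    intro dd DD δδ u v e JJ he hgap hu hJJ
    have h1 : dd * e ≤ dd * (2 * u) := Nat.mul_le_mul_left dd he
    have h2 : (DD + δδ + 1) * 1 ≤ (DD + δδ + 1) * u := Nat.mul_le_mul_left _ hu
    nlinarith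
  have hJbig : D + d * (fm N m).natDegree < J :=
    harith d D δ (N m) (N (m + 1)) _ J hfmdeg hgap hNm hJ
  have hT1 : PowerSeries.coeff n' (PowerSeries.coeff J (φ' (E m))) = 0 := by
    rw [hφcoeff, coeff_eval_eq_zero Q (fm N m) hJbig, map_zero]
  -- term 3 vanishes by t-adic order
  have hT3 : PowerSeries.coeff n' (PowerSeries.coeff J (kk * g ^ 2)) = 0 := by
    have h2 : tOrd (kk * g ^ 2) (0 + ((m + 1) + (m + 1))) := by
      rw [sq]
      exact tOrd_mul (tOrd_zero kk) (tOrd_mul (tOrd_diff N hmono m) (tOrd_diff N hmono m))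
    exact h2 J n' (by omega)
  -- term 2 equals γ δ
  have hT2 : PowerSeries.coeff n' (PowerSeries.coeff J (φ' (E' m) * g)) =
      γ δ := by
    rw [PowerSeries.coeff_mul, map_sum]
    rw [Finset.sum_eq_single ((δ, 2 * N (m + 1)) : ℕ × ℕ)]
    · -- main term
      rw [PowerSeries.coeff_mul]
      rw [Finset.sum_eq_single ((w, m + 1) : ℕ × ℕ)]
      · rw [hφcoeff, ← hagree m δ w (by omega), coeff_diff_top N hmono m, lac_coeff_top]
        simp [hγdef]
      · intro q hq hqne
        rw [Finset.HasAntidiagonal.mem_antidiagonal] at hq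
        rcases lt_trichotomy q.2 (m + 1) with h | h | h
        · rw [tOrd_diff N hmono m _ q.2 h, mul_zero]
        · exfalso; apply hqne
          have : q.1 = w := by omega
          exact Prod.ext this h
        · have hq1 : q.1 < w := by omega
          rw [hφcoeff, ← hagree m _ q.1 (by omega), hwmin q.1 hq1, zero_mul]
      · intro hnot
        exfalso
        exact hnot (Finset.HasAntidiagonal.mem_antidiagonal.mpr (by omega))
    · intro p hp hpne
      rw [Finset.HasAntidiagonal.mem_antidiagonal] at hp
      rw [PowerSeries.coeff_mul]
      refine Finset.sum_eq_zero fun q hq => ?_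
      rw [Finset.HasAntidiagonal.mem_antidiagonal] at hq
      rcases lt_trichotomy q.2 (m + 1) with h | h | h
      · rw [tOrd_diff N hmono m _ q.2 h, mul_zero]
      · -- q = (w, m+1); p off-diagonal
        have hq1 : q.1 = w := by omega
        rw [hq1, hφcoeff, ← hagree m _ w (by omega), h, coeff_diff_top N hmono m]
        rcases lt_trichotomy p.1 δ with hp1 | hp1 | hp1
        · rw [lac_coeff_gt (k := N (m + 1)) (by omega), mul_zero]
        · exfalso; apply hpne; exact Prod.ext hp1 (by omega)
        · have hz : (PowerSeries.coeff w) ((PowerSeries.coeff p.1) G) = 0 :=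
            hδtop p.1 hp1
          rw [hz, zero_mul]
      · have hq1 : q.1 < w := by omega
        rw [hφcoeff, ← hagree m _ q.1 (by omega), hwmin q.1 hq1, zero_mul]
    · intro hnot
      exfalso
      exact hnot (Finset.HasAntidiagonal.mem_antidiagonal.mpr (by omega))
  rw [hT1, hT2, hT3] at hc
  simp at hc
  exact hδ hc
end

section
/- With f(x) = Σ_{i>0} t^i P_{N_i}(x) where P_k(x) = x^k ∏_{j=1}^k (x - j), for every i > 0 and every integer j with 1 ≤ j ≤ N_i, the value f(j) is a polynomial in t of degree strictly less than i. Consequently, the number of points (x, f(x)) with both coordinates polynomials in t of degree < i and x ∈ {1,...,N_i} ⊆ ℂ ⊆ ℂ[[t]] is at least N_i. -/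
open PowerSeries

noncomputable def lacunaryValue (N : ℕ → ℕ) (z : ℂ) : PowerSeries ℂ :=
  PowerSeries.mk fun i => if i = 0 then 0 else (lacunaryPoly (N i)).eval z

lemma lacunaryPoly_eval_zero {j k : ℕ} (h1 : 1 ≤ j) (h2 : j ≤ k) :
    (lacunaryPoly k).eval (j : ℂ) = 0 := by
  unfold lacunaryPoly
  rw [Polynomial.eval_mul, Polynomial.eval_prod]
  have : ∏ m ∈ Finset.range k, ((Polynomial.X - Polynomial.C ((m : ℂ) + 1)).eval (j : ℂ)) = 0 := by
    apply Finset.prod_eq_zero (i := j - 1) (Finset.mem_range.mpr (by omega))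
    simp only [Polynomial.eval_sub, Polynomial.eval_X, Polynomial.eval_C]
    have : ((j - 1 : ℕ) : ℂ) = (j : ℂ) - 1 := by
      push_cast [Nat.cast_sub h1]; ring
    rw [this]; ring
  rw [this, mul_zero]

/-- for every `i > 0` and every integer `1 ≤ j ≤ N_i`, the value `f(j)` is a
polynomial in `t` of degree `< i` (all `t`-coefficients from place `i` on vanish), and
consequently the set of points `(x, f(x))` with `x ∈ {1, …, N_i} ⊆ ℂ ⊆ ℂ[[t]]` — whose
coordinates are polynomials in `t` of degree `< i` — has cardinality at least `N_i`. -/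
theorem lacunaryValue_low_degree_and_many_points
    (N : ℕ → ℕ) (hmono : StrictMono N) (hpos : 0 < N 1) (i : ℕ) (hi : 0 < i) :
    (∀ j : ℕ, 1 ≤ j → j ≤ N i → ∀ s : ℕ, i ≤ s →
        PowerSeries.coeff s (lacunaryValue N (j : ℂ)) = 0) ∧
    (N i : ℕ) ≤ Set.ncard {p : PowerSeries ℂ × PowerSeries ℂ |
        ∃ j : ℕ, 1 ≤ j ∧ j ≤ N i ∧
          p = (PowerSeries.C (j : ℂ), lacunaryValue N (j : ℂ))} := by
  constructor
  · intro j h1 h2 s hs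
    simp only [lacunaryValue, PowerSeries.coeff_mk]
    rw [if_neg (by omega)]
    exact lacunaryPoly_eval_zero h1 (h2.trans (hmono.le_iff_le.mpr hs))
  · have hset : {p : PowerSeries ℂ × PowerSeries ℂ |
        ∃ j : ℕ, 1 ≤ j ∧ j ≤ N i ∧
          p = (PowerSeries.C (j : ℂ), lacunaryValue N (j : ℂ))}
        = (fun j : ℕ => (PowerSeries.C (j : ℂ), lacunaryValue N (j : ℂ))) '' (Set.Icc 1 (N i)) := by
      ext p
      simp [Set.mem_image, eq_comm, and_assoc]
    rw [hset]
    rw [Set.ncard_image_of_injOn]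
    · rw [show (Set.Icc 1 (N i)) = ↑(Finset.Icc 1 (N i)) by simp,
        Set.ncard_coe_finset, Nat.card_Icc]
      omega
    · intro a _ b _ hab
      have := congrArg Prod.fst hab
      simp only at this
      have : (a : ℂ) = b := by
        exact_mod_cast PowerSeries.C_injective this
      exact_mod_cast this
end

section
/- Let f ∈ O_K⟨x_1,...,x_n⟩ ⊗_{O_K} K with K = ℂ((t)), and fix r ≥ 1. Then there exists an integer N > 0 such that for every x ∈ O_K(r)^n (polynomial tuples of degree < r in t), either f(x) = 0 or ord_t f(x) ≤ N. -/
open PowerSeries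

/-- The tuple `x(a) ∈ O_K(r)^n`: the `j`-th coordinate is the polynomial
`Σ_{ℓ<r} a_{jℓ} t^ℓ ∈ ℂ[[t]]` coded by the complex tuple `a`. -/
noncomputable def substTuple (n r : ℕ) (a : Fin n × Fin r → ℂ) (j : Fin n) :
    PowerSeries ℂ :=
  ∑ ℓ : Fin r, PowerSeries.C (a (j, ℓ)) * (PowerSeries.X : PowerSeries ℂ) ^ (ℓ : ℕ)

/-- The `M`-th partial sum of the substitution `f(x(a))`. -/
noncomputable def substPartialSum (n r : ℕ)
    (f : MvPowerSeries (Fin n) (PowerSeries ℂ)) (M : ℕ)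
    (a : Fin n × Fin r → ℂ) : PowerSeries ℂ :=
  MvPolynomial.eval (substTuple n r a)
    (MvPowerSeries.trunc (PowerSeries ℂ)
      (Finsupp.equivFunOnFinite.symm fun _ : Fin n => M) f)

/-- The generic substitution tuple, with the `a`'s replaced by polynomial variables. -/
noncomputable def genTuple (n r : ℕ) (j : Fin n) :
    PowerSeries (MvPolynomial (Fin n × Fin r) ℂ) :=
  ∑ ℓ : Fin r, PowerSeries.C (MvPolynomial.X (j, ℓ)) *
    (PowerSeries.X : PowerSeries (MvPolynomial (Fin n × Fin r) ℂ)) ^ (ℓ : ℕ)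

/-- The generic `M`-th partial sum, a power series with polynomial coefficients. -/
noncomputable def genPartial (n r : ℕ)
    (f : MvPowerSeries (Fin n) (PowerSeries ℂ)) (M : ℕ) :
    PowerSeries (MvPolynomial (Fin n × Fin r) ℂ) :=
  MvPolynomial.eval (genTuple n r)
    (MvPolynomial.map (PowerSeries.map (MvPolynomial.C))
      (MvPowerSeries.trunc (PowerSeries ℂ)
        (Finsupp.equivFunOnFinite.symm fun _ : Fin n => M) f))

lemma map_genTuple (n r : ℕ) (a : Fin n × Fin r → ℂ) (j : Fin n) :
    PowerSeries.map (MvPolynomial.eval a) (genTuple n r j) = substTuple n r a j := by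
  simp [genTuple, substTuple, map_sum, map_mul, map_pow, PowerSeries.map_C, PowerSeries.map_X]

lemma map_genPartial (n r : ℕ) (f : MvPowerSeries (Fin n) (PowerSeries ℂ)) (M : ℕ)
    (a : Fin n × Fin r → ℂ) :
    PowerSeries.map (MvPolynomial.eval a) (genPartial n r f M) = substPartialSum n r f M a := by
  unfold genPartial substPartialSum
  set Q := MvPowerSeries.trunc (PowerSeries ℂ)
      (Finsupp.equivFunOnFinite.symm fun _ : Fin n => M) f with hQ
  rw [← MvPolynomial.eval₂_eq_eval_map, MvPolynomial.eval₂_comp_left]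
  have h1 : (PowerSeries.map (MvPolynomial.eval a)).comp
      (PowerSeries.map (MvPolynomial.C : ℂ →+* MvPolynomial (Fin n × Fin r) ℂ)) =
      RingHom.id (PowerSeries ℂ) := by
    rw [← PowerSeries.map_comp]
    have : (MvPolynomial.eval a).comp (MvPolynomial.C : ℂ →+* MvPolynomial (Fin n × Fin r) ℂ)
        = RingHom.id ℂ := by
      ext c; simp
    rw [this]
    ext φ k
    simp [PowerSeries.coeff_map]
  have h2 : (PowerSeries.map (MvPolynomial.eval a)) ∘ genTuple n r = substTuple n r a := by
    funext j; exact map_genTuple n r a j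
  rw [h1, h2, MvPolynomial.eval₂_id]

/-- Stabilization: once the truncation level exceeds a bound determined by the
finitely many coefficients of order `< s+1`, the `s`-th coefficient of the partial
sums no longer changes. -/
lemma stab (n r : ℕ) (f : MvPowerSeries (Fin n) (PowerSeries ℂ)) (s B : ℕ)
    (hB : ∀ d : Fin n →₀ ℕ,
      (MvPowerSeries.coeff d f).order < ((s + 1 : ℕ) : ℕ∞) → ∀ j, d j < B)
    (M : ℕ) (hM : B ≤ M) (a : Fin n × Fin r → ℂ) :
    PowerSeries.coeff s (substPartialSum n r f M a) =
      PowerSeries.coeff s (substPartialSum n r f B a) := by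
  classical
  set cM : Fin n →₀ ℕ := Finsupp.equivFunOnFinite.symm fun _ : Fin n => M with hcM
  set cB : Fin n →₀ ℕ := Finsupp.equivFunOnFinite.symm fun _ : Fin n => B with hcB
  have hcMa : ∀ j, cM j = M := fun j => rfl
  have hcBa : ∀ j, cB j = B := fun j => rfl
  set T : ℕ → MvPolynomial (Fin n) (PowerSeries ℂ) := fun k =>
    MvPowerSeries.trunc (PowerSeries ℂ) (Finsupp.equivFunOnFinite.symm fun _ : Fin n => k) f
  rw [← sub_eq_zero]
  have : substPartialSum n r f M a - substPartialSum n r f B a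
      = MvPolynomial.eval (substTuple n r a) (T M - T B) := by
    unfold substPartialSum; rw [map_sub]
  rw [← map_sub, this, MvPolynomial.eval_eq', map_sum]
  apply Finset.sum_eq_zero
  intro d hd
  have hmem := MvPolynomial.mem_support_iff.mp hd
  -- analyze the coefficient of the difference of truncations
  have hcoeff : (T M - T B).coeff d =
      (if d < cM then MvPowerSeries.coeff d f else 0) -
      (if d < cB then MvPowerSeries.coeff d f else 0) := by
    rw [MvPolynomial.coeff_sub, MvPowerSeries.coeff_trunc, MvPowerSeries.coeff_trunc]
  have hnotB : ¬ d < cB := by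
    intro hlt
    have hle : d ≤ cB := le_of_lt hlt
    have hne : ¬ cB ≤ d := not_le_of_gt hlt
    have hltM : d < cM := by
      constructor
      · intro j
        exact le_trans (hle j) (by rw [hcBa, hcMa]; exact hM)
      · intro hMd
        apply hne
        intro j
        exact le_trans (by rw [hcBa, hcMa]; exact hM) (hMd j)
    rw [hcoeff, if_pos hltM, if_pos hlt, sub_self] at hmem
    exact hmem rfl
  have hltM : d < cM := by
    by_contra hnM
    rw [hcoeff, if_neg hnM, if_neg hnotB, sub_self] at hmem
    exact hmem rfl
  have hval : (T M - T B).coeff d = MvPowerSeries.coeff d f := by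
    rw [hcoeff, if_pos hltM, if_neg hnotB, sub_zero]
  -- the order of this coefficient is > s
  have horder : (s : ℕ∞) < (MvPowerSeries.coeff d f).order := by
    by_contra hcon
    push_neg at hcon
    have hlt : (MvPowerSeries.coeff d f).order < ((s + 1 : ℕ) : ℕ∞) := by
      refine lt_of_le_of_lt hcon ?_
      exact_mod_cast Nat.lt_succ_self s
    have hdj := hB d hlt
    apply hnotB
    constructor
    · intro j; rw [hcBa]; exact le_of_lt (hdj j)
    · intro hBd
      obtain ⟨j₀, hj₀⟩ : ∃ j₀ : Fin n, True := by
        rcases hltM with ⟨-, hne⟩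
        by_contra hempty
        push_neg at hempty
        apply hne
        intro j
        exact (hempty j).elim
      exact absurd (hBd j₀) (not_le_of_gt (by rw [hcBa]; exact hdj j₀))
  -- hence the s-th coefficient of the term vanishes
  rw [hval]
  apply PowerSeries.coeff_of_lt_order
  calc (s : ℕ∞) < (MvPowerSeries.coeff d f).order := horder
    _ ≤ (MvPowerSeries.coeff d f).order
        + (∏ j, substTuple n r a j ^ d j).order := le_self_add
    _ ≤ _ := PowerSeries.le_order_mul _ _

/-- let `f ∈ O_K⟨x_1,…,x_n⟩` be a restricted power series over
`O_K = ℂ[[t]]` and let `F a = f(x(a))` denote the (t-adically convergent) substituted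
value at the tuple of polynomials of degree `< r` coded by `a`. Then there is an integer
`N > 0`, uniform in `a`, such that for every `a` either `f(x(a)) = 0` or
`ord_t f(x(a)) ≤ N`. (The same bound then holds for `f ⊗ c`, `c ∈ K = ℂ((t))`, since
multiplying by `c` shifts all orders by the constant `ord c`.) -/
theorem uniform_order_bound_of_restricted_substitution
    (n r : ℕ) (f : MvPowerSeries (Fin n) (PowerSeries ℂ))
    (hf : ∀ M : ℕ, {d : Fin n →₀ ℕ |
        (MvPowerSeries.coeff d f).order < (M : ℕ∞)}.Finite)
    (F : (Fin n × Fin r → ℂ) → PowerSeries ℂ)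
    (hF : ∀ (a : Fin n × Fin r → ℂ) (s : ℕ), ∃ M₀ : ℕ, ∀ M ≥ M₀,
      PowerSeries.coeff s (substPartialSum n r f M a) = PowerSeries.coeff s (F a)) :
    ∃ N : ℕ, 0 < N ∧ ∀ a : Fin n × Fin r → ℂ,
      F a = 0 ∨ (F a).order ≤ (N : ℕ∞) := by
  classical
  -- a truncation level that captures all coefficients of order < s+1
  let Msel : ℕ → ℕ := fun s => ((hf (s + 1)).toFinset.sup fun d => ∑ j, d j) + 1
  have hMsel : ∀ s (d : Fin n →₀ ℕ),
      (MvPowerSeries.coeff d f).order < ((s + 1 : ℕ) : ℕ∞) →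
      ∀ j, d j < Msel s := by
    intro s d hd j
    have hdmem : d ∈ (hf (s + 1)).toFinset := (Set.Finite.mem_toFinset _).mpr hd
    have h1 : d j ≤ ∑ j', d j' := Finset.single_le_sum (fun _ _ => Nat.zero_le _)
      (Finset.mem_univ j)
    have h2 : (∑ j', d j') ≤ (hf (s + 1)).toFinset.sup fun d => ∑ j', d j' :=
      Finset.le_sup (f := fun d : Fin n →₀ ℕ => ∑ j', d j') hdmem
    exact Nat.lt_succ_of_le (le_trans h1 h2)
  -- the coefficient polynomials
  let P : ℕ → MvPolynomial (Fin n × Fin r) ℂ := fun s =>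
    PowerSeries.coeff s (genPartial n r f (Msel s))
  have hP : ∀ (s : ℕ) (a : Fin n × Fin r → ℂ),
      MvPolynomial.eval a (P s) = PowerSeries.coeff s (F a) := by
    intro s a
    obtain ⟨M₀, hM₀⟩ := hF a s
    have e1 : MvPolynomial.eval a (P s) =
        PowerSeries.coeff s (substPartialSum n r f (Msel s) a) := by
      rw [← map_genPartial n r f (Msel s) a, PowerSeries.coeff_map]
    have e2 : PowerSeries.coeff s (substPartialSum n r f (max M₀ (Msel s)) a) =
        PowerSeries.coeff s (substPartialSum n r f (Msel s) a) :=
      stab n r f s (Msel s) (hMsel s) _ (le_max_right _ _) a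
    rw [e1, ← e2, hM₀ _ (le_max_left _ _)]
  -- Noetherianity: the chain of ideals generated by the P s stabilizes
  let I : ℕ →o Ideal (MvPolynomial (Fin n × Fin r) ℂ) :=
    ⟨fun N => Ideal.span (P '' Set.Iic N), by
      intro N₁ N₂ h
      exact Ideal.span_mono (Set.image_mono (Set.Iic_subset_Iic.mpr h))⟩
  obtain ⟨n₀, hn₀⟩ := monotone_stabilizes_iff_noetherian.mpr
    (inferInstance : IsNoetherianRing (MvPolynomial (Fin n × Fin r) ℂ)) I
  have hPmem : ∀ s, P s ∈ I n₀ := by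
    intro s
    have : P s ∈ I (max s n₀) :=
      Ideal.subset_span ⟨s, Set.mem_Iic.mpr (le_max_left _ _), rfl⟩
    rwa [← hn₀ _ (le_max_right _ _)] at this
  refine ⟨n₀ + 1, Nat.succ_pos _, fun a => ?_⟩
  by_cases h : (F a).order ≤ ((n₀ + 1 : ℕ) : ℕ∞)
  · exact Or.inr h
  · left
    push_neg at h
    -- all the generating polynomials vanish at a
    have hgen : P '' Set.Iic n₀ ⊆ ↑(RingHom.ker (MvPolynomial.eval a :
        MvPolynomial (Fin n × Fin r) ℂ →+* ℂ)) := by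
      rintro - ⟨s, hs, rfl⟩
      have hlt : (s : ℕ∞) < (F a).order := by
        refine lt_of_le_of_lt ?_ h
        exact_mod_cast Nat.le_succ_of_le hs
      have : PowerSeries.coeff s (F a) = 0 := PowerSeries.coeff_of_lt_order s hlt
      simpa [RingHom.mem_ker, hP s a] using this
    have hker : I n₀ ≤ RingHom.ker (MvPolynomial.eval a :
        MvPolynomial (Fin n × Fin r) ℂ →+* ℂ) := Ideal.span_le.mpr hgen
    ext s
    have := hker (hPmem s)
    rw [RingHom.mem_ker] at this
    rw [hP s a] at this
    simpa using this
end
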